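/- The highest generalized Dellac configuration C_1(l,m,n) has exactly C(nl,2)(m-1) + l²·C(n,2)(m-1)(m-2) + n·C(l,2)·C(m-1,2) inversions. -/

import Mathlib

/-- Ceiling division `⌈j/l⌉`. -/
def ceilDiv' (j l : ℕ) : ℕ := (j + l - 1) / l

/-- A generalized Dellac configuration of size `n` with type `(l,m)`: a set of dots
`(i,j)` (`i` = row from bottom, `j` = column, both 1-based) in an `mn × ln` grid with
`l` dots per row, `m` dots per column, and `⌈j/l⌉ ≤ i ≤ ⌈j/l⌉ + (m-1)n` for each dot. -/
def IsGenDellac (l m n : ℕ) (C : Finset (ℕ × ℕ)) : Prop :=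
  (∀ d ∈ C, 1 ≤ d.1 ∧ d.1 ≤ m * n ∧ 1 ≤ d.2 ∧ d.2 ≤ l * n ∧
      ceilDiv' d.2 l ≤ d.1 ∧ d.1 ≤ ceilDiv' d.2 l + (m - 1) * n) ∧
  (∀ i ∈ Finset.Icc 1 (m * n), (C.filter (fun d => d.1 = i)).card = l) ∧
  (∀ j ∈ Finset.Icc 1 (l * n), (C.filter (fun d => d.2 = j)).card = m)

/-- Number of inversions of a configuration: pairs of dots `(d₁,d₂)` with `d₁` in a
strictly lower row and strictly greater column than `d₂`. -/
def invDC (C : Finset (ℕ × ℕ)) : ℕ :=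
  ((C ×ˢ C).filter (fun p => p.1.1 < p.2.1 ∧ p.2.2 < p.1.2)).card

/-- The lowest configuration `C₀(l,m,n)`: column `j = pl+q` has dots in rows `pm+1,...,(p+1)m`. -/
def lowestC (l m n : ℕ) : Finset (ℕ × ℕ) :=
  (Finset.Icc 1 (m * n) ×ˢ Finset.Icc 1 (l * n)).filter
    (fun d => (d.2 - 1) / l * m + 1 ≤ d.1 ∧ d.1 ≤ ((d.2 - 1) / l + 1) * m)

/-- The highest configuration `C₁(l,m,n)`: column `j` has a dot in row `⌈j/l⌉`, a dot in
row `(m-1)n + ⌈j/l⌉`, and (with `k = n - ⌈j/l⌉`) dots in rows `n + k(m-2)+1, ..., n+(k+1)(m-2)`. -/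
def highestC (l m n : ℕ) : Finset (ℕ × ℕ) :=
  (Finset.Icc 1 (m * n) ×ˢ Finset.Icc 1 (l * n)).filter
    (fun d =>
      d.1 = ceilDiv' d.2 l ∨ d.1 = (m - 1) * n + ceilDiv' d.2 l ∨
      (n + (n - ceilDiv' d.2 l) * (m - 2) + 1 ≤ d.1 ∧
        d.1 ≤ n + (n - ceilDiv' d.2 l + 1) * (m - 2)))

/- ### Auxiliary lemmas -/

lemma card_lt_pairs (s : Finset ℕ) :
    ((s ×ˢ s).filter (fun p => p.1 < p.2)).card = s.card.choose 2 := by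
  have hswap : ((s ×ˢ s).filter (fun p => p.2 < p.1)).card
      = ((s ×ˢ s).filter (fun p => p.1 < p.2)).card := by
    apply Finset.card_nbij' Prod.swap Prod.swap
    · intro p hp; simp only [Finset.mem_coe, Finset.mem_filter, Finset.mem_product, Prod.fst_swap, Prod.snd_swap] at *; tauto
    · intro p hp; simp only [Finset.mem_coe, Finset.mem_filter, Finset.mem_product, Prod.fst_swap, Prod.snd_swap] at *; tauto
    · intro p _; simp
    · intro p _; simp
  have hdisj : Disjoint ((s ×ˢ s).filter (fun p => p.1 < p.2))
      ((s ×ˢ s).filter (fun p => p.2 < p.1)) := by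
    rw [Finset.disjoint_left]
    intro p hp hq
    simp only [Finset.mem_filter] at hp hq
    omega
  have hunion : ((s ×ˢ s).filter (fun p => p.1 < p.2)) ∪ ((s ×ˢ s).filter (fun p => p.2 < p.1))
      = s.offDiag := by
    rw [← Finset.filter_or]
    ext p
    simp only [Finset.mem_filter, Finset.mem_offDiag, Finset.mem_product]
    constructor
    · rintro ⟨⟨h1, h2⟩, h3⟩; exact ⟨h1, h2, by omega⟩
    · rintro ⟨h1, h2, h3⟩; exact ⟨⟨h1, h2⟩, by omega⟩
  have h2 := Finset.card_union_of_disjoint hdisj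
  rw [hunion, Finset.offDiag_card, hswap] at h2
  rw [Nat.choose_two_right]
  have hk : s.card * (s.card - 1) = s.card * s.card - s.card := by
    cases s.card with
    | zero => simp
    | succ t => simp [Nat.succ_sub_one]; ring_nf; omega
  rw [hk]
  omega

lemma card_gt_pairs (s : Finset ℕ) :
    ((s ×ˢ s).filter (fun p => p.2 < p.1)).card = s.card.choose 2 := by
  rw [← card_lt_pairs]
  apply Finset.card_nbij' Prod.swap Prod.swap
  · intro p hp; simp only [Finset.mem_coe, Finset.mem_filter, Finset.mem_product, Prod.fst_swap, Prod.snd_swap] at *; tauto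
  · intro p hp; simp only [Finset.mem_coe, Finset.mem_filter, Finset.mem_product, Prod.fst_swap, Prod.snd_swap] at *; tauto
  · intro p _; simp
  · intro p _; simp

lemma sum_sum_ite_card (s t : Finset ℕ) (R : ℕ → ℕ → Prop) [DecidableRel R] :
    (∑ x ∈ s, ∑ y ∈ t, if R x y then 1 else 0) = ((s ×ˢ t).filter (fun p => R p.1 p.2)).card := by
  rw [Finset.card_filter, Finset.sum_product]

/-- The set of rows occupied in a column of block `c` of the highest configuration. -/
def Rset (m n c : ℕ) : Finset ℕ :=
  insert c (insert ((m-1)*n + c)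
    (Finset.Icc (n + (n-c)*(m-2) + 1) (n + (n-c+1)*(m-2))))

lemma Rset_card {m n c : ℕ} (hm : 2 ≤ m) (hc1 : 1 ≤ c) (hc2 : c ≤ n) :
    (Rset m n c).card = m := by
  obtain ⟨M, rfl⟩ : ∃ M, m = M + 2 := ⟨m - 2, by omega⟩
  have e0 : M + 2 - 2 = M := by omega
  have e0' : M + 2 - 1 = M + 1 := by omega
  have e1 : (n - c + 1) * M = (n - c) * M + M := by ring
  have k2 : (n - c + 1) * M ≤ n * M := Nat.mul_le_mul_right M (by omega)
  have e3 : (M + 1) * n = n * M + n := by ring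
  rw [Rset, e0, e0']
  rw [Finset.card_insert_of_notMem (by simp [Finset.mem_Icc]; omega),
    Finset.card_insert_of_notMem (by simp [Finset.mem_Icc]; omega),
    Nat.card_Icc]
  omega

lemma rowset {m n c : ℕ} (hm : 2 ≤ m) (hn : 1 ≤ n) (hc1 : 1 ≤ c) (hc2 : c ≤ n) :
    ((Finset.Icc 1 (m*n)).filter (fun i =>
      i = c ∨ i = (m-1)*n + c ∨ (n + (n-c)*(m-2) + 1 ≤ i ∧ i ≤ n + (n-c+1)*(m-2))))
      = Rset m n c := by
  obtain ⟨M, rfl⟩ : ∃ M, m = M + 2 := ⟨m - 2, by omega⟩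
  have e0 : M + 2 - 2 = M := by omega
  have e0' : M + 2 - 1 = M + 1 := by omega
  have e1 : (n - c + 1) * M = (n - c) * M + M := by ring
  have k2 : (n - c + 1) * M ≤ n * M := Nat.mul_le_mul_right M (by omega)
  have e3 : (M + 1) * n = n * M + n := by ring
  have e4 : (M + 2) * n = n * M + n + n := by ring
  ext i
  simp only [Rset, e0, e0', Finset.mem_filter, Finset.mem_Icc, Finset.mem_insert]
  constructor
  · rintro ⟨h1, h2⟩; tauto
  · intro h; constructor <;> omega

lemma S_eq {m n c : ℕ} (hm : 2 ≤ m) (hc1 : 1 ≤ c) (hc2 : c ≤ n) :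
    (∑ i1 ∈ Rset m n c, ∑ i2 ∈ Rset m n c, if i1 < i2 then 1 else 0) = m.choose 2 := by
  rw [sum_sum_ite_card, card_lt_pairs, Rset_card hm hc1 hc2]

lemma S_cross {m n c1 c2 : ℕ} (hm : 2 ≤ m) (hc2 : 1 ≤ c2) (hlt : c2 < c1) (hc1 : c1 ≤ n) :
    (∑ i1 ∈ Rset m n c1, ∑ i2 ∈ Rset m n c2, if i1 < i2 then 1 else 0) = (m-1)^2 := by
  obtain ⟨M, rfl⟩ : ∃ M, m = M + 2 := ⟨m - 2, by omega⟩
  have e0 : M + 2 - 2 = M := by omega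
  have e0' : M + 2 - 1 = M + 1 := by omega
  have e1 : (n - c1 + 1) * M = (n - c1) * M + M := by ring
  have e2 : (n - c2 + 1) * M = (n - c2) * M + M := by ring
  have k1 : (n - c1 + 1) * M ≤ (n - c2) * M := Nat.mul_le_mul_right M (by omega)
  have k2 : (n - c2 + 1) * M ≤ n * M := Nat.mul_le_mul_right M (by omega)
  have e3 : (M + 1) * n = n * M + n := by ring
  simp only [Rset, e0, e0']
  have hB1 : ((M+1)*n + c2) ∉ Finset.Icc (n + (n-c2)*M + 1) (n + (n-c2+1)*M) := by
    simp only [Finset.mem_Icc]; omega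
  have hB2 : c2 ∉ insert ((M+1)*n + c2) (Finset.Icc (n + (n-c2)*M + 1) (n + (n-c2+1)*M)) := by
    simp only [Finset.mem_insert, Finset.mem_Icc]; omega
  have hT : ∀ x, c2 ≤ x → x ≤ n + (n - c1 + 1) * M →
      (∑ i2 ∈ insert c2 (insert ((M+1)*n + c2)
        (Finset.Icc (n + (n-c2)*M + 1) (n + (n-c2+1)*M))), if x < i2 then 1 else 0) = M + 1 := by
    intro x hx1 hx2
    rw [Finset.sum_insert hB2, Finset.sum_insert hB1, if_neg (by omega), if_pos (by omega)]
    rw [Finset.sum_congr rfl (fun y hy => by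
      rw [if_pos]; simp only [Finset.mem_Icc] at hy; omega)]
    rw [Finset.sum_const, Nat.card_Icc, smul_eq_mul]
    omega
  have hTH : (∑ i2 ∈ insert c2 (insert ((M+1)*n + c2)
      (Finset.Icc (n + (n-c2)*M + 1) (n + (n-c2+1)*M))),
        if (M+1)*n + c1 < i2 then 1 else 0) = 0 := by
    apply Finset.sum_eq_zero
    intro y hy
    simp only [Finset.mem_insert, Finset.mem_Icc] at hy
    rw [if_neg]; omega
  have hA1 : ((M+1)*n + c1) ∉ Finset.Icc (n + (n-c1)*M + 1) (n + (n-c1+1)*M) := by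
    simp only [Finset.mem_Icc]; omega
  have hA2 : c1 ∉ insert ((M+1)*n + c1) (Finset.Icc (n + (n-c1)*M + 1) (n + (n-c1+1)*M)) := by
    simp only [Finset.mem_insert, Finset.mem_Icc]; omega
  rw [Finset.sum_insert hA2, Finset.sum_insert hA1, hT c1 (by omega) (by omega), hTH]
  rw [Finset.sum_congr rfl (fun x hx => hT x
    (by simp only [Finset.mem_Icc] at hx; omega)
    (by simp only [Finset.mem_Icc] at hx; omega))]
  rw [Finset.sum_const, Nat.card_Icc, smul_eq_mul]
  have : n + (n - c1 + 1) * M + 1 - (n + (n - c1) * M + 1) = M := by omega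
  rw [this]
  ring_nf

lemma ceilDiv'_spec {l j : ℕ} (hl : 1 ≤ l) (hj : 1 ≤ j) :
    1 ≤ ceilDiv' j l ∧ l * (ceilDiv' j l - 1) + 1 ≤ j ∧ j ≤ l * ceilDiv' j l := by
  obtain ⟨c, hc⟩ : ∃ c, ceilDiv' j l = c := ⟨_, rfl⟩
  rw [hc]
  have h := Nat.div_add_mod (j + l - 1) l
  have hr : (j + l - 1) % l < l := Nat.mod_lt _ (by omega)
  rw [show (j + l - 1) / l = c from hc] at h
  rcases Nat.eq_zero_or_pos c with h0 | h0
  · rw [h0, Nat.mul_zero] at h; omega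
  · obtain ⟨c', rfl⟩ : ∃ c', c = c' + 1 := ⟨c - 1, by omega⟩
    have e : l * (c' + 1) = l * c' + l := by ring
    simp only [Nat.add_sub_cancel]
    omega

lemma ceilDiv'_le {l n j : ℕ} (hl : 1 ≤ l) (hj1 : 1 ≤ j) (hj : j ≤ l * n) :
    ceilDiv' j l ≤ n := by
  obtain ⟨h1, h2, h3⟩ := ceilDiv'_spec (l := l) (j := j) hl hj1
  by_contra hcon
  have : n ≤ ceilDiv' j l - 1 := by omega
  have := Nat.mul_le_mul_left l this
  omega

lemma ceilDiv'_eq_of_mem {l c j : ℕ} (hl : 1 ≤ l) (hc : 1 ≤ c)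
    (h1 : l * (c - 1) + 1 ≤ j) (h2 : j ≤ l * c) : ceilDiv' j l = c := by
  obtain ⟨g1, g2, g3⟩ := ceilDiv'_spec (l := l) (j := j) hl (by omega)
  rcases lt_trichotomy (ceilDiv' j l) c with h | h | h
  · have : ceilDiv' j l ≤ c - 1 := by omega
    have := Nat.mul_le_mul_left l this
    omega
  · exact h
  · have : c ≤ ceilDiv' j l - 1 := by omega
    have := Nat.mul_le_mul_left l this
    omega

lemma blockU {l n : ℕ} (hl : 1 ≤ l) :
    Finset.Icc 1 (l * n) = (Finset.Icc 1 n).biUnion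
      (fun c => Finset.Icc (l * (c - 1) + 1) (l * c)) := by
  ext j
  simp only [Finset.mem_Icc, Finset.mem_biUnion]
  constructor
  · rintro ⟨h1, h2⟩
    obtain ⟨g1, g2, g3⟩ := ceilDiv'_spec (l := l) (j := j) hl h1
    exact ⟨ceilDiv' j l, ⟨g1, ceilDiv'_le hl h1 h2⟩, g2, g3⟩
  · rintro ⟨c, ⟨hc1, hc2⟩, h1, h2⟩
    have := Nat.mul_le_mul_left l hc2
    omega

lemma block_pd {l n : ℕ} (hl : 1 ≤ l) :
    Set.PairwiseDisjoint ↑(Finset.Icc 1 n)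
      (fun c => Finset.Icc (l * (c - 1) + 1) (l * c)) := by
  intro c hc c' hc' hne
  simp only [Finset.coe_Icc, Set.mem_Icc] at hc hc'
  simp only [Function.onFun]
  rw [Finset.disjoint_left]
  intro j hj hj'
  simp only [Finset.mem_Icc] at hj hj'
  rcases lt_or_gt_of_ne hne with h | h
  · have : c ≤ c' - 1 := by omega
    have := Nat.mul_le_mul_left l this
    omega
  · have : c' ≤ c - 1 := by omega
    have := Nat.mul_le_mul_left l this
    omega

lemma block_card {l c : ℕ} (hc : 1 ≤ c) :
    (Finset.Icc (l * (c - 1) + 1) (l * c)).card = l := by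
  rw [Nat.card_Icc]
  obtain ⟨c', rfl⟩ : ∃ c', c = c' + 1 := ⟨c - 1, by omega⟩
  have e : l * (c' + 1) = l * c' + l := by ring
  simp only [Nat.add_sub_cancel]
  omega

lemma twoChoose (k : ℕ) : 2 * Nat.choose k 2 = k * (k - 1) := by
  rw [Nat.choose_two_right]
  rcases Nat.even_or_odd k with ⟨t, ht⟩ | ⟨t, ht⟩
  · have h1 : k * (k - 1) = 2 * (t * (k - 1)) := by rw [ht]; ring
    rw [h1]; omega
  · have h1 : k - 1 = 2 * t := by omega
    have h2 : k * (k - 1) = 2 * (k * t) := by rw [h1]; ring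
    rw [h2]; omega

lemma finalArith (l m n : ℕ) (hl : 1 ≤ l) (hm : 2 ≤ m) (hn : 1 ≤ n) :
    n * (Nat.choose l 2 * Nat.choose m 2) + l * l * (m-1)^2 * Nat.choose n 2
      = Nat.choose (n * l) 2 * (m - 1) + l ^ 2 * Nat.choose n 2 * (m - 1) * (m - 2)
        + n * Nat.choose l 2 * Nat.choose (m - 1) 2 := by
  obtain ⟨m', rfl⟩ : ∃ m', m = m' + 2 := ⟨m - 2, by omega⟩
  obtain ⟨l', rfl⟩ : ∃ l', l = l' + 1 := ⟨l - 1, by omega⟩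
  obtain ⟨n', rfl⟩ : ∃ n', n = n' + 1 := ⟨n - 1, by omega⟩
  apply Nat.eq_of_mul_eq_mul_left (show 0 < 4 by norm_num)
  have ha := twoChoose (l' + 1)
  have hb := twoChoose (n' + 1)
  have he := twoChoose (m' + 2)
  have hm1 := twoChoose (m' + 1)
  have hnl := twoChoose ((n' + 1) * (l' + 1))
  have e1 : (l' + 1) - 1 = l' := by omega
  have e2 : (n' + 1) - 1 = n' := by omega
  have e3 : (m' + 2) - 1 = m' + 1 := by omega
  have e4 : (m' + 2) - 2 = m' := by omega
  have e5 : (m' + 1) - 1 = m' := by omega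
  have e6 : (n' + 1) * (l' + 1) - 1 = n' * l' + n' + l' := by
    have : (n' + 1) * (l' + 1) = n' * l' + n' + l' + 1 := by ring
    omega
  rw [e1] at ha; rw [e2] at hb; rw [e3] at he; rw [e5] at hm1; rw [e6] at hnl
  calc 4 * ((n' + 1) * (Nat.choose (l' + 1) 2 * Nat.choose (m' + 2) 2)
        + (l' + 1) * (l' + 1) * ((m' + 2) - 1) ^ 2 * Nat.choose (n' + 1) 2)
      = (n' + 1) * ((2 * Nat.choose (l' + 1) 2) * (2 * Nat.choose (m' + 2) 2))
        + (l' + 1) * (l' + 1) * ((m' + 2) - 1) ^ 2 * (2 * Nat.choose (n' + 1) 2) * 2 := by ring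
    _ = (n' + 1) * (((l' + 1) * l') * ((m' + 2) * (m' + 1)))
        + (l' + 1) * (l' + 1) * (m' + 1) ^ 2 * ((n' + 1) * n') * 2 := by rw [ha, hb, he, e3]
    _ = 4 * (Nat.choose ((n' + 1) * (l' + 1)) 2 * ((m' + 2) - 1)
        + (l' + 1) ^ 2 * Nat.choose (n' + 1) 2 * ((m' + 2) - 1) * ((m' + 2) - 2)
        + (n' + 1) * Nat.choose (l' + 1) 2 * Nat.choose ((m' + 2) - 1) 2) := by
        rw [e3, e4]
        calc (n' + 1) * (((l' + 1) * l') * ((m' + 2) * (m' + 1)))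
            + (l' + 1) * (l' + 1) * (m' + 1) ^ 2 * ((n' + 1) * n') * 2
            = ((n' + 1) * (l' + 1) * (n' * l' + n' + l')) * (m' + 1) * 2
              + (l' + 1)^2 * ((n' + 1) * n') * (m' + 1) * m' * 2
              + (n' + 1) * ((l' + 1) * l') * ((m' + 1) * m') := by ring
          _ = (2 * Nat.choose ((n' + 1) * (l' + 1)) 2) * ((m' + 1) * 2)
              + (l' + 1)^2 * (2 * Nat.choose (n' + 1) 2) * (m' + 1) * m' * 2
              + (n' + 1) * (2 * Nat.choose (l' + 1) 2) * (2 * Nat.choose (m' + 1) 2) := by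
              rw [ha, hb, hm1, hnl]; ring
          _ = _ := by ring

lemma sum4_reorder (A B : Finset ℕ) (F : ℕ → ℕ → ℕ → ℕ → ℕ) :
    (∑ i1 ∈ A, ∑ j1 ∈ B, ∑ i2 ∈ A, ∑ j2 ∈ B, F i1 j1 i2 j2)
    = ∑ j1 ∈ B, ∑ j2 ∈ B, ∑ i1 ∈ A, ∑ i2 ∈ A, F i1 j1 i2 j2 := by
  rw [Finset.sum_comm]
  refine Finset.sum_congr rfl fun j1 _ => ?_
  refine (Finset.sum_congr rfl fun i1 _ => Finset.sum_comm).trans ?_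
  exact Finset.sum_comm

lemma inner_transform (A : Finset ℕ) (P1 P2 : ℕ → Prop) [DecidablePred P1] [DecidablePred P2] :
    (∑ i1 ∈ A, ∑ i2 ∈ A, if ((P1 i1 ∧ P2 i2) ∧ i1 < i2) then 1 else 0)
    = ∑ i1 ∈ A.filter P1, ∑ i2 ∈ A.filter P2, if i1 < i2 then 1 else 0 := by
  simp only [Finset.sum_filter]
  refine Finset.sum_congr rfl fun i1 _ => ?_
  by_cases h1 : P1 i1
  · rw [if_pos h1]
    refine Finset.sum_congr rfl fun i2 _ => ?_
    by_cases h2 : P2 i2 <;> by_cases h3 : i1 < i2 <;> simp [h1, h2, h3]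
  · rw [if_neg h1]
    refine Finset.sum_eq_zero fun i2 _ => ?_
    simp [h1]

lemma innerG {l m n c1 c2 j1 j2 : ℕ} (hl : 1 ≤ l) (hm : 2 ≤ m) (hn : 1 ≤ n)
    (hc1 : c1 ∈ Finset.Icc 1 n) (hc2 : c2 ∈ Finset.Icc 1 n)
    (hj1 : j1 ∈ Finset.Icc (l*(c1-1)+1) (l*c1)) (hj2 : j2 ∈ Finset.Icc (l*(c2-1)+1) (l*c2)) :
    (∑ i1 ∈ Finset.Icc 1 (m*n), ∑ i2 ∈ Finset.Icc 1 (m*n),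
      if ((i1 = ceilDiv' j1 l ∨ i1 = (m-1)*n + ceilDiv' j1 l ∨
            (n + (n - ceilDiv' j1 l)*(m-2) + 1 ≤ i1 ∧ i1 ≤ n + (n - ceilDiv' j1 l + 1)*(m-2))) ∧
          (i2 = ceilDiv' j2 l ∨ i2 = (m-1)*n + ceilDiv' j2 l ∨
            (n + (n - ceilDiv' j2 l)*(m-2) + 1 ≤ i2 ∧ i2 ≤ n + (n - ceilDiv' j2 l + 1)*(m-2)))) ∧
          (i1 < i2 ∧ j2 < j1) then 1 else 0)
    = if c1 = c2 then (if j2 < j1 then m.choose 2 else 0)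
      else (if c2 < c1 then (m-1)^2 else 0) := by
  simp only [Finset.mem_Icc] at hc1 hc2 hj1 hj2
  have hd1 : ceilDiv' j1 l = c1 := ceilDiv'_eq_of_mem hl hc1.1 hj1.1 hj1.2
  have hd2 : ceilDiv' j2 l = c2 := ceilDiv'_eq_of_mem hl hc2.1 hj2.1 hj2.2
  simp only [hd1, hd2]
  by_cases hjj : j2 < j1
  · simp only [hjj, and_true, if_true]
    rw [inner_transform (Finset.Icc 1 (m*n))
      (fun i => i = c1 ∨ i = (m-1)*n + c1 ∨
        (n + (n - c1)*(m-2) + 1 ≤ i ∧ i ≤ n + (n - c1 + 1)*(m-2)))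
      (fun i => i = c2 ∨ i = (m-1)*n + c2 ∨
        (n + (n - c2)*(m-2) + 1 ≤ i ∧ i ≤ n + (n - c2 + 1)*(m-2)))]
    rw [rowset hm hn hc1.1 hc1.2, rowset hm hn hc2.1 hc2.2]
    by_cases hcc : c1 = c2
    · subst hcc
      rw [if_pos rfl, S_eq hm hc1.1 hc1.2]
    · have hlt : c2 < c1 := by
        by_contra hcon
        have h5 : c1 ≤ c2 - 1 := by omega
        have := Nat.mul_le_mul_left l h5
        omega
      rw [if_neg hcc, if_pos hlt, S_cross hm hc2.1 hlt hc1.2]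
  · have hz : (if c1 = c2 then (if j2 < j1 then m.choose 2 else 0)
        else (if c2 < c1 then (m-1)^2 else 0)) = 0 := by
      by_cases hcc : c1 = c2
      · simp [hcc, hjj]
      · have hnlt : ¬ c2 < c1 := by
          intro hlt
          have h5 : c2 ≤ c1 - 1 := by omega
          have := Nat.mul_le_mul_left l h5
          omega
        simp [hcc, hnlt]
    rw [hz]
    refine Finset.sum_eq_zero fun i1 _ => Finset.sum_eq_zero fun i2 _ => ?_
    rw [if_neg]
    intro h
    exact hjj h.2.2

/-- `inv(C₁(l,m,n)) = C(nl,2)(m-1) + l²·C(n,2)(m-1)(m-2) + n·C(l,2)·C(m-1,2)`. -/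
theorem stmt5 (l m n : ℕ) (hl : 1 ≤ l) (hm : 2 ≤ m) (hn : 1 ≤ n) :
    invDC (highestC l m n) =
      Nat.choose (n * l) 2 * (m - 1) + l ^ 2 * Nat.choose n 2 * (m - 1) * (m - 2)
        + n * Nat.choose l 2 * Nat.choose (m - 1) 2 := by
  classical
  rw [invDC, highestC, ← Finset.filter_product, Finset.filter_filter, Finset.card_filter]
  rw [Finset.sum_product]
  simp only [Finset.sum_product]
  rw [sum4_reorder]
  rw [blockU hl (n := n)]
  rw [Finset.sum_biUnion (block_pd hl)]
  simp only [Finset.sum_biUnion (block_pd hl)]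
  have step1 : ∀ c1 ∈ Finset.Icc 1 n, (∑ j1 ∈ Finset.Icc (l*(c1-1)+1) (l*c1),
      ∑ c2 ∈ Finset.Icc 1 n, ∑ j2 ∈ Finset.Icc (l*(c2-1)+1) (l*c2),
        ∑ i1 ∈ Finset.Icc 1 (m*n), ∑ i2 ∈ Finset.Icc 1 (m*n),
          if ((i1 = ceilDiv' j1 l ∨ i1 = (m-1)*n + ceilDiv' j1 l ∨
              (n + (n - ceilDiv' j1 l)*(m-2) + 1 ≤ i1 ∧ i1 ≤ n + (n - ceilDiv' j1 l + 1)*(m-2))) ∧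
            (i2 = ceilDiv' j2 l ∨ i2 = (m-1)*n + ceilDiv' j2 l ∨
              (n + (n - ceilDiv' j2 l)*(m-2) + 1 ≤ i2 ∧ i2 ≤ n + (n - ceilDiv' j2 l + 1)*(m-2)))) ∧
            (i1 < i2 ∧ j2 < j1) then 1 else 0)
      = ∑ c2 ∈ Finset.Icc 1 n,
          (if c1 = c2 then Nat.choose l 2 * Nat.choose m 2
           else if c2 < c1 then l * l * (m-1)^2 else 0) := by
    intro c1 hc1
    rw [Finset.sum_comm]
    refine Finset.sum_congr rfl fun c2 hc2 => ?_
    have hval : ∀ j1 ∈ Finset.Icc (l*(c1-1)+1) (l*c1), ∀ j2 ∈ Finset.Icc (l*(c2-1)+1) (l*c2),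
        (∑ i1 ∈ Finset.Icc 1 (m*n), ∑ i2 ∈ Finset.Icc 1 (m*n),
          if ((i1 = ceilDiv' j1 l ∨ i1 = (m-1)*n + ceilDiv' j1 l ∨
              (n + (n - ceilDiv' j1 l)*(m-2) + 1 ≤ i1 ∧ i1 ≤ n + (n - ceilDiv' j1 l + 1)*(m-2))) ∧
            (i2 = ceilDiv' j2 l ∨ i2 = (m-1)*n + ceilDiv' j2 l ∨
              (n + (n - ceilDiv' j2 l)*(m-2) + 1 ≤ i2 ∧ i2 ≤ n + (n - ceilDiv' j2 l + 1)*(m-2)))) ∧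
            (i1 < i2 ∧ j2 < j1) then 1 else 0)
        = if c1 = c2 then (if j2 < j1 then m.choose 2 else 0)
          else (if c2 < c1 then (m-1)^2 else 0) :=
      fun j1 hj1 j2 hj2 => innerG hl hm hn hc1 hc2 hj1 hj2
    rw [Finset.sum_congr rfl (fun j1 hj1 => Finset.sum_congr rfl (fun j2 hj2 => hval j1 hj1 j2 hj2))]
    simp only [Finset.mem_Icc] at hc1 hc2
    by_cases hcc : c1 = c2
    · subst hcc
      simp only [if_pos rfl]
      calc (∑ j1 ∈ Finset.Icc (l*(c1-1)+1) (l*c1), ∑ j2 ∈ Finset.Icc (l*(c1-1)+1) (l*c1),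
            if j2 < j1 then m.choose 2 else 0)
          = ∑ j1 ∈ Finset.Icc (l*(c1-1)+1) (l*c1), ∑ j2 ∈ Finset.Icc (l*(c1-1)+1) (l*c1),
            m.choose 2 * (if j2 < j1 then 1 else 0) := by
            refine Finset.sum_congr rfl fun _ _ => Finset.sum_congr rfl fun _ _ => ?_
            split_ifs <;> ring
        _ = m.choose 2 * ∑ j1 ∈ Finset.Icc (l*(c1-1)+1) (l*c1),
            ∑ j2 ∈ Finset.Icc (l*(c1-1)+1) (l*c1), (if j2 < j1 then 1 else 0) := by
            rw [Finset.mul_sum]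
            exact Finset.sum_congr rfl fun _ _ => (Finset.mul_sum _ _ _).symm
        _ = m.choose 2 * ((Finset.Icc (l*(c1-1)+1) (l*c1) ×ˢ Finset.Icc (l*(c1-1)+1) (l*c1)).filter
              (fun p => p.2 < p.1)).card := by rw [sum_sum_ite_card]
        _ = Nat.choose l 2 * Nat.choose m 2 := by
            rw [card_gt_pairs, block_card hc1.1]; ring
    · simp only [if_neg hcc]
      by_cases hlt : c2 < c1
      · simp only [if_pos hlt]
        rw [Finset.sum_congr rfl (fun j1 _ => Finset.sum_const _), Finset.sum_const]
        rw [block_card hc1.1, block_card hc2.1]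
        simp only [smul_eq_mul]
        ring
      · simp only [if_neg hlt]
        simp
  rw [Finset.sum_congr rfl step1]
  have split : ∀ c1 ∈ Finset.Icc 1 n, ∀ c2 ∈ Finset.Icc 1 n,
      (if c1 = c2 then Nat.choose l 2 * Nat.choose m 2
        else if c2 < c1 then l * l * (m-1)^2 else 0)
      = (if c1 = c2 then Nat.choose l 2 * Nat.choose m 2 else 0)
        + (if c2 < c1 then l * l * (m-1)^2 else 0) := by
    intro c1 _ c2 _
    split_ifs <;> omega
  rw [Finset.sum_congr rfl (fun c1 hc1 => Finset.sum_congr rfl (fun c2 hc2 => split c1 hc1 c2 hc2))]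
  rw [Finset.sum_congr rfl (fun c1 _ => Finset.sum_add_distrib), Finset.sum_add_distrib]
  have part1 : (∑ c1 ∈ Finset.Icc 1 n, ∑ c2 ∈ Finset.Icc 1 n,
      (if c1 = c2 then Nat.choose l 2 * Nat.choose m 2 else 0))
      = n * (Nat.choose l 2 * Nat.choose m 2) := by
    rw [Finset.sum_congr rfl (fun c1 hc1 => by
      rw [Finset.sum_ite_eq (Finset.Icc 1 n) c1 (fun _ => Nat.choose l 2 * Nat.choose m 2),
        if_pos hc1])]
    rw [Finset.sum_const, Nat.card_Icc, smul_eq_mul, Nat.add_sub_cancel]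
  have part2 : (∑ c1 ∈ Finset.Icc 1 n, ∑ c2 ∈ Finset.Icc 1 n,
      (if c2 < c1 then l * l * (m-1)^2 else 0))
      = l * l * (m-1)^2 * Nat.choose n 2 := by
    calc (∑ c1 ∈ Finset.Icc 1 n, ∑ c2 ∈ Finset.Icc 1 n,
          (if c2 < c1 then l * l * (m-1)^2 else 0))
        = ∑ c1 ∈ Finset.Icc 1 n, ∑ c2 ∈ Finset.Icc 1 n,
          (l * l * (m-1)^2) * (if c2 < c1 then 1 else 0) := by
          refine Finset.sum_congr rfl fun _ _ => Finset.sum_congr rfl fun _ _ => ?_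
          split_ifs <;> ring
      _ = (l * l * (m-1)^2) * ∑ c1 ∈ Finset.Icc 1 n, ∑ c2 ∈ Finset.Icc 1 n,
          (if c2 < c1 then 1 else 0) := by
          rw [Finset.mul_sum]
          exact Finset.sum_congr rfl fun _ _ => (Finset.mul_sum _ _ _).symm
      _ = (l * l * (m-1)^2) * ((Finset.Icc 1 n ×ˢ Finset.Icc 1 n).filter
            (fun p => p.2 < p.1)).card := by rw [sum_sum_ite_card]
      _ = l * l * (m-1)^2 * Nat.choose n 2 := by
          rw [card_gt_pairs, Nat.card_Icc, Nat.add_sub_cancel]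
  rw [part1, part2]
  exact finalArith l m n hl hm hn
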